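/- arXiv:1710.00582 — 2 statements merged into one kernel-verified Lean document; each statement's English description precedes it below -/
import Mathlib

section
/- If a finite group G satisfies the replacement property (for irredundant generating sequences of maximal length m(G)), then the Frattini subgroup of G is trivial. -/
open Subgroup
open scoped Classical

/-- A set `s` is an irredundant generating set of the group `G`: it generates `G`
but no proper subset does. -/
def IrredSet {G : Type*} [Group G] (s : Set G) : Prop :=
  Subgroup.closure s = ⊤ ∧ ∀ x ∈ s, Subgroup.closure (s \ {x}) ≠ ⊤

/-- `mIrr G` is the largest size of an irredundant generating set of `G`. -/
noncomputable def mIrr (G : Type*) [Group G] : ℕ :=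
  sSup {n | ∃ s : Set G, s.Finite ∧ s.ncard = n ∧ IrredSet s}

/-- `dGen G` is the smallest size of a generating set of `G`. -/
noncomputable def dGen (G : Type*) [Group G] : ℕ :=
  sInf {n | ∃ s : Set G, s.Finite ∧ s.ncard = n ∧ Subgroup.closure s = ⊤}

/-- A sequence `g : Fin n → G` is an irredundant generating sequence:
it generates `G` but no proper subsequence does. -/
def IrredSeq {G : Type*} [Group G] {n : ℕ} (g : Fin n → G) : Prop :=
  Subgroup.closure (Set.range g) = ⊤ ∧
  ∀ i : Fin n, Subgroup.closure (g '' {i}ᶜ) ≠ ⊤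

/-- `G` satisfies the replacement property: for every irredundant generating
sequence of maximal length `mIrr G` and every nontrivial `x : G`, some entry
can be replaced by `x` so that the sequence still generates. -/
def ReplacementProperty (G : Type*) [Group G] : Prop :=
  ∀ g : Fin (mIrr G) → G, IrredSeq g → ∀ x : G, x ≠ 1 →
    ∃ i, Subgroup.closure (Set.range (Function.update g i x)) = ⊤

/-- The strong replacement property: replacement holds for irredundant
generating sequences of any length. -/
def StrongReplacementProperty (G : Type*) [Group G] : Prop :=
  ∀ (n : ℕ) (g : Fin n → G), IrredSeq g → ∀ x : G, x ≠ 1 →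
    ∃ i, Subgroup.closure (Set.range (Function.update g i x)) = ⊤

/-- `G` is a K-group: its subgroup lattice is complemented. -/
def IsKGroup (G : Type*) [Group G] : Prop :=
  ∀ H : Subgroup G, ∃ X : Subgroup G, H ⊔ X = ⊤ ∧ H ⊓ X = ⊥

/-- `μ` is the Möbius function of the subgroup lattice of `G`. -/
def IsMobius {G : Type*} [Group G] (μ : Subgroup G → ℤ) : Prop :=
  ∀ H : Subgroup G, ∑ᶠ K ∈ {K : Subgroup G | H ≤ K}, μ K = if H = ⊤ then 1 else 0

/-- `B/A` is a chief factor of `G`. -/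
def ChiefFactor {G : Type*} [Group G] (A B : Subgroup G) : Prop :=
  A.Normal ∧ B.Normal ∧ A < B ∧
    ∀ N : Subgroup G, N.Normal → A ≤ N → N ≤ B → N = A ∨ N = B

/-- The factor `B/A` is complemented in `G/A`: there is a subgroup `K ≥ A`
with `K ⊔ B = G` and `K ⊓ B = A`. -/
def ComplementedFactor {G : Type*} [Group G] (A B : Subgroup G) : Prop :=
  ∃ K : Subgroup G, A ≤ K ∧ K ⊔ B = ⊤ ∧ K ⊓ B = A

/-- `c` is a chief series of `G`. -/
def IsChiefSeries {G : Type*} [Group G] {n : ℕ} (c : Fin (n + 1) → Subgroup G) : Prop :=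
  c 0 = ⊥ ∧ c (Fin.last n) = ⊤ ∧ ∀ i : Fin n, ChiefFactor (c i.castSucc) (c i.succ)

/-- `N` is a minimal normal subgroup of `G`. -/
def IsMinimalNormal {G : Type*} [Group G] (N : Subgroup G) : Prop :=
  N.Normal ∧ N ≠ ⊥ ∧ ∀ K : Subgroup G, K.Normal → K ≤ N → K = ⊥ ∨ K = N

/-- `F` is the Fitting subgroup of `G`: the largest nilpotent normal subgroup. -/
def IsFitting {G : Type*} [Group G] (F : Subgroup G) : Prop :=
  F.Normal ∧ Group.IsNilpotent F ∧
    ∀ K : Subgroup G, K.Normal → Group.IsNilpotent K → K ≤ F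

lemma exists_irred (G : Type*) [Group G] [Finite G] :
    ∃ s : Set G, s.Finite ∧ s.ncard = mIrr G ∧ IrredSet s := by
  set S := {n | ∃ s : Set G, s.Finite ∧ s.ncard = n ∧ IrredSet s} with hS
  have hne : S.Nonempty := by
    set D := {n | ∃ s : Set G, s.Finite ∧ s.ncard = n ∧ Subgroup.closure s = ⊤} with hD
    have hDne : D.Nonempty := ⟨(Set.univ : Set G).ncard, Set.univ, Set.finite_univ, rfl, by
      simp [Subgroup.closure_univ]⟩
    obtain ⟨s, hsf, hsc, hst⟩ := Nat.sInf_mem hDne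
    refine ⟨s.ncard, s, hsf, rfl, hst, ?_⟩
    intro x hx hcon
    have hlt : (s \ {x}).ncard < s.ncard := by
      have := Set.ncard_diff_singleton_lt_of_mem hx hsf
      exact this
    have : sInf D ≤ (s \ {x}).ncard :=
      Nat.sInf_le ⟨s \ {x}, hsf.diff, rfl, hcon⟩
    omega
  have hbdd : BddAbove S := by
    refine ⟨Nat.card G, fun n hn => ?_⟩
    obtain ⟨s, hsf, hsc, _⟩ := hn
    rw [← hsc]
    calc s.ncard ≤ (Set.univ : Set G).ncard := Set.ncard_le_ncard (Set.subset_univ s) Set.finite_univ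
      _ = Nat.card G := Set.ncard_univ G
  have := Nat.sSup_mem hne hbdd
  exact this

theorem replacementProperty_implies_frattini_eq_bot
    (G : Type*) [Group G] [Finite G] (h : ReplacementProperty G) :
    frattini G = ⊥ := by
  rw [eq_bot_iff]
  intro x hx
  rw [Subgroup.mem_bot]
  by_contra hx1
  obtain ⟨s, hsf, hsc, hgen, hirr⟩ := exists_irred G
  haveI := hsf.fintype
  have hcard : Fintype.card s = mIrr G := by
    rw [← hsc, ← Nat.card_coe_set_eq, Nat.card_eq_fintype_card]
  set e : Fin (mIrr G) ≃ s := (Fintype.equivFinOfCardEq hcard).symm with he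
  set g : Fin (mIrr G) → G := fun i => (e i : G) with hg
  have hginj : Function.Injective g := Subtype.coe_injective.comp e.injective
  have hrange : Set.range g = s := by
    ext y
    constructor
    · rintro ⟨j, rfl⟩; exact (e j).2
    · intro hy; exact ⟨e.symm ⟨y, hy⟩, by simp [hg]⟩
  have himg : ∀ i, g '' {i}ᶜ = s \ {g i} := by
    intro i
    ext y
    constructor
    · rintro ⟨j, hj, rfl⟩
      refine ⟨hrange ▸ Set.mem_range_self j, ?_⟩
      simp only [Set.mem_singleton_iff]
      intro hc
      exact hj (hginj hc)
    · rintro ⟨hy, hy2⟩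
      obtain ⟨j, rfl⟩ := hrange ▸ hy
      exact ⟨j, fun hc => hy2 (Set.mem_singleton_iff.mpr (by rw [Set.mem_singleton_iff.mp hc])), rfl⟩
  have hseq : IrredSeq g := by
    refine ⟨by rw [hrange]; exact hgen, fun i hc => ?_⟩
    rw [himg i] at hc
    exact hirr (g i) (hrange ▸ Set.mem_range_self i) hc
  obtain ⟨i, htop⟩ := h g hseq x hx1
  have hsub : Set.range (Function.update g i x) ⊆ insert x (g '' {i}ᶜ) := by
    rintro y ⟨j, rfl⟩
    by_cases hj : j = i
    · subst hj; rw [Function.update_self]; exact Set.mem_insert _ _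
    · rw [Function.update_of_ne hj]
      exact Set.mem_insert_of_mem _ ⟨j, hj, rfl⟩
  have hle : (⊤ : Subgroup G) ≤ Subgroup.closure (g '' {i}ᶜ) ⊔ frattini G := by
    calc (⊤ : Subgroup G) = Subgroup.closure (Set.range (Function.update g i x)) := htop.symm
      _ ≤ Subgroup.closure (insert x (g '' {i}ᶜ)) := Subgroup.closure_mono hsub
      _ = Subgroup.closure {x} ⊔ Subgroup.closure (g '' {i}ᶜ) := by
          rw [Set.insert_eq, Subgroup.closure_union]
      _ ≤ frattini G ⊔ Subgroup.closure (g '' {i}ᶜ) := by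
          gcongr
          exact (Subgroup.closure_le _).mpr (Set.singleton_subset_iff.mpr hx)
      _ = Subgroup.closure (g '' {i}ᶜ) ⊔ frattini G := sup_comm _ _
  exact hseq.2 i (frattini_nongenerating (top_le_iff.mp hle))
end

section
/- Let G be a finite soluble group satisfying the replacement property, with trivial Frattini subgroup, and write the Fitting subgroup F = N_1 × ... × N_t as a direct product of minimal normal subgroups with complement H in G. Then H also satisfies the replacement property. -/
open Subgroup
open scoped Classical

section AuxRepl

open Function Set
open scoped commutatorElement

variable {G : Type*} [Group G]

lemma aux_normal_iSup {ι : Sort*} (N : ι → Subgroup G) (h : ∀ i, (N i).Normal) :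
    (⨆ i, N i).Normal := by
  constructor
  intro x hx g
  refine Subgroup.iSup_induction N (C := fun y => g * y * g⁻¹ ∈ ⨆ i, N i) hx ?_ ?_ ?_
  · intro i y hy
    exact le_iSup N i ((h i).conj_mem y hy g)
  · show g * 1 * g⁻¹ ∈ ⨆ i, N i
    have h1 : g * 1 * g⁻¹ = 1 := by group
    rw [h1]; exact one_mem _
  · intro a b ha hb
    have hab : g * (a * b) * g⁻¹ = (g * a * g⁻¹) * (g * b * g⁻¹) := by group
    rw [hab]; exact mul_mem ha hb

lemma aux_closure_insert_one (s : Set G) :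
    Subgroup.closure (insert 1 s) = Subgroup.closure s := by
  rw [Set.insert_eq, Subgroup.closure_union, Subgroup.closure_singleton_one, bot_sup_eq]

lemma aux_range_update {n : ℕ} {β : Type*} (g : Fin n → β) (i : Fin n) (x : β) :
    Set.range (Function.update g i x) = insert x (g '' {i}ᶜ) := by
  classical
  ext y
  simp only [Set.mem_range, Set.mem_insert_iff, Set.mem_image, Set.mem_compl_iff,
    Set.mem_singleton_iff]
  constructor
  · rintro ⟨k, rfl⟩
    rcases eq_or_ne k i with rfl | hk
    · left; simp
    · right; exact ⟨k, hk, by simp [Function.update_of_ne hk]⟩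
  · rintro (rfl | ⟨k, hk, rfl⟩)
    · exact ⟨i, by simp⟩
    · exact ⟨k, by simp [Function.update_of_ne hk]⟩

lemma aux_closure_compl_eq_top_of_mem {n : ℕ} {g : Fin n → G}
    (hgen : Subgroup.closure (Set.range g) = ⊤) {i : Fin n}
    (h : g i ∈ Subgroup.closure (g '' {i}ᶜ)) : Subgroup.closure (g '' {i}ᶜ) = ⊤ := by
  rw [eq_top_iff, ← hgen, Subgroup.closure_le]
  rintro y ⟨k, rfl⟩
  rcases eq_or_ne k i with rfl | hk
  · exact h
  · exact Subgroup.subset_closure ⟨k, hk, rfl⟩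

lemma aux_irredseq_injective {n : ℕ} {g : Fin n → G} (hg : IrredSeq g) :
    Function.Injective g := by
  intro k l hkl
  by_contra hne
  exact hg.2 k (aux_closure_compl_eq_top_of_mem hg.1
    (hkl ▸ Subgroup.subset_closure ⟨l, Ne.symm hne, rfl⟩))

lemma aux_mIrr_bddAbove [Finite G] :
    BddAbove {n | ∃ s : Set G, s.Finite ∧ s.ncard = n ∧ IrredSet s} := by
  refine ⟨Nat.card G, ?_⟩
  rintro n ⟨s, hfin, rfl, -⟩
  simpa [Set.ncard_univ] using Set.ncard_le_ncard (Set.subset_univ s) Set.finite_univ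

lemma aux_mem_mIrrSet {n : ℕ} {g : Fin n → G} (hg : IrredSeq g) :
    n ∈ {n | ∃ s : Set G, s.Finite ∧ s.ncard = n ∧ IrredSet s} := by
  have hinj := aux_irredseq_injective hg
  refine ⟨Set.range g, Set.finite_range g, ?_, hg.1, ?_⟩
  · rw [← Set.image_univ, Set.ncard_image_of_injOn hinj.injOn, Set.ncard_univ]; simp
  · rintro x ⟨i, rfl⟩ htop
    refine hg.2 i ?_
    have hd : Set.range g \ {g i} = g '' {i}ᶜ := by
      ext y
      simp only [Set.mem_diff, Set.mem_range, Set.mem_singleton_iff, Set.mem_image,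
        Set.mem_compl_iff]
      constructor
      · rintro ⟨⟨k, rfl⟩, hne⟩; exact ⟨k, fun hc => hne (by rw [hc]), rfl⟩
      · rintro ⟨k, hk, rfl⟩; exact ⟨⟨k, rfl⟩, fun hc => hk (hinj hc)⟩
    rw [← hd]; exact htop

lemma aux_le_mIrr [Finite G] {n : ℕ} {g : Fin n → G} (hg : IrredSeq g) : n ≤ mIrr G :=
  le_csSup aux_mIrr_bddAbove (aux_mem_mIrrSet hg)

lemma aux_irredset_to_seq {n : ℕ} {s : Set G} (hfin : s.Finite) (hcard : s.ncard = n)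
    (hirr : IrredSet s) : ∃ g : Fin n → G, IrredSeq g := by
  classical
  have hn : hfin.toFinset.card = n := by rw [← hcard, Set.ncard_eq_toFinset_card _ hfin]
  let e : Fin n ≃ hfin.toFinset := (hfin.toFinset.equivFin.trans (finCongr hn)).symm
  let g : Fin n → G := fun k => ((e k : hfin.toFinset) : G)
  have hrange : Set.range g = s := by
    ext y
    constructor
    · rintro ⟨k, rfl⟩; exact hfin.mem_toFinset.mp (e k).2
    · intro hy
      exact ⟨e.symm ⟨y, hfin.mem_toFinset.mpr hy⟩, by simp [g]⟩
  have hinj : Function.Injective g := fun a b hab => e.injective (Subtype.ext hab)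
  refine ⟨g, ?_, ?_⟩
  · rw [hrange]; exact hirr.1
  · intro i htop
    refine hirr.2 (g i) (by rw [← hrange]; exact ⟨i, rfl⟩) ?_
    have hd : g '' {i}ᶜ = s \ {g i} := by
      ext y
      simp only [Set.mem_diff, Set.mem_singleton_iff, Set.mem_image, Set.mem_compl_iff]
      constructor
      · rintro ⟨k, hk, rfl⟩
        exact ⟨by rw [← hrange]; exact ⟨k, rfl⟩, fun hc => hk (hinj hc)⟩
      · rintro ⟨hy, hne⟩
        have : y ∈ Set.range g := by rw [hrange]; exact hy
        obtain ⟨k, rfl⟩ := this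
        exact ⟨k, fun hc => hne (by rw [hc]), rfl⟩
    rw [hd] at htop; exact htop

lemma aux_irredseq_equiv {m' n' : ℕ} (e : Fin n' ≃ Fin m') (g : Fin m' → G) (hg : IrredSeq g) :
    IrredSeq (g ∘ e) := by
  constructor
  · rw [e.surjective.range_comp]; exact hg.1
  · intro i
    have himg : (g ∘ e) '' {i}ᶜ = g '' {e i}ᶜ := by
      ext y
      simp only [Set.mem_image, Set.mem_compl_iff, Set.mem_singleton_iff, Function.comp_apply]
      constructor
      · rintro ⟨l, hl, rfl⟩; exact ⟨e l, fun hc => hl (e.injective hc), rfl⟩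
      · rintro ⟨l, hl, rfl⟩
        refine ⟨e.symm l, fun hc => hl ?_, by simp⟩
        rw [← e.apply_symm_apply l, hc]
    rw [himg]; exact hg.2 _

lemma aux_update_comp {α : Type*} {m' n' : ℕ} (e : Fin n' ≃ Fin m') (g : Fin m' → α)
    (i : Fin n') (x : α) :
    Function.update (g ∘ e) i x = (Function.update g (e i) x) ∘ e := by
  classical
  funext k
  by_cases hk : k = i
  · subst hk; simp
  · rw [Function.update_of_ne hk]
    have hne : e k ≠ e i := fun hc => hk (e.injective hc)
    simp [Function.update_of_ne hne]

lemma aux_mem_sup_normal {A B : Subgroup G} [B.Normal] {x : G} (hx : x ∈ A ⊔ B) :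
    ∃ a ∈ A, ∃ b ∈ B, a * b = x := by
  have hx' : x ∈ (↑(A ⊔ B) : Set G) := hx
  rw [Subgroup.mul_normal] at hx'
  exact Set.mem_mul.mp hx'

lemma aux_eq_of_inf_ker_map {G' : Type*} [Group G'] (ρ : G →* G') {A B : Subgroup G}
    (hAB : A ≤ B) (hinf : A ⊓ ρ.ker = B ⊓ ρ.ker) (hmap : A.map ρ = B.map ρ) : A = B := by
  refine le_antisymm hAB fun b hb => ?_
  have h1 : ρ b ∈ A.map ρ := by rw [hmap]; exact Subgroup.mem_map_of_mem ρ hb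
  obtain ⟨a, ha, hab⟩ := h1
  have h2 : a⁻¹ * b ∈ B ⊓ ρ.ker := by
    refine Subgroup.mem_inf.mpr ⟨mul_mem (inv_mem (hAB ha)) hb, ?_⟩
    simp [MonoidHom.mem_ker, hab]
  rw [← hinf] at h2
  have h3 : a * (a⁻¹ * b) ∈ A := mul_mem ha (Subgroup.mem_inf.mp h2).1
  simpa using h3

lemma aux_modular {R X M : Subgroup G} [M.Normal] (hRX : R ≤ X) (hX : X ≤ R ⊔ M) :
    X = R ⊔ (X ⊓ M) := by
  refine le_antisymm ?_ (sup_le hRX inf_le_left)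
  intro x hx
  obtain ⟨r, hr, m, hm, hrm⟩ := aux_mem_sup_normal (hX hx)
  have hmX : m ∈ X := by
    have h1 : r⁻¹ * x ∈ X := mul_mem (inv_mem (hRX hr)) hx
    rw [← hrm] at h1; simpa using h1
  rw [← hrm]
  exact mul_mem ((le_sup_left : R ≤ R ⊔ (X ⊓ M)) hr)
    ((le_sup_right : X ⊓ M ≤ R ⊔ (X ⊓ M)) (Subgroup.mem_inf.mpr ⟨hmX, hm⟩))

lemma aux_eq_of_inf_sup {A B R : Subgroup G} [R.Normal] (hAB : A ≤ B)
    (hinf : A ⊓ R = B ⊓ R) (hsup : A ⊔ R = B ⊔ R) : A = B := by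
  refine le_antisymm hAB fun b hb => ?_
  have hbAR : b ∈ A ⊔ R := by rw [hsup]; exact (le_sup_left : B ≤ B ⊔ R) hb
  obtain ⟨a, ha, r, hr, har⟩ := aux_mem_sup_normal hbAR
  have hrb : r = a⁻¹ * b := by rw [← har]; group
  have hrB : r ∈ B ⊓ R := Subgroup.mem_inf.mpr ⟨hrb ▸ mul_mem (inv_mem (hAB ha)) hb, hr⟩
  rw [← hinf] at hrB
  have h3 : a * r ∈ A := mul_mem ha (Subgroup.mem_inf.mp hrB).1
  rwa [har] at h3

lemma aux_inter_normal {F K : Subgroup G} [F.Normal]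
    (hab : ∀ x ∈ F, ∀ y ∈ F, x * y = y * x) (h : K ⊔ F = ⊤) : (K ⊓ F).Normal := by
  constructor
  intro x hx g
  obtain ⟨hxK, hxF⟩ := Subgroup.mem_inf.mp hx
  have hg : g ∈ K ⊔ F := by rw [h]; trivial
  obtain ⟨k, hk, f, hf, hkf⟩ := aux_mem_sup_normal hg
  have hfx : f * x * f⁻¹ = x := by
    rw [hab f hf x hxF]; group
  have hgx : g * x * g⁻¹ = k * (f * x * f⁻¹) * k⁻¹ := by rw [← hkf]; group
  rw [hgx, hfx]
  exact Subgroup.mem_inf.mpr ⟨mul_mem (mul_mem hk hxK) (inv_mem hk),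
    (‹F.Normal›).conj_mem x hxF k⟩

lemma aux_map_top_iff {G' : Type*} [Group G'] {ρ : G →* G'} (hsurj : Function.Surjective ρ)
    (X : Subgroup G) : X.map ρ = ⊤ ↔ X ⊔ ρ.ker = ⊤ := by
  constructor
  · intro hX
    have h1 := congrArg (Subgroup.comap ρ) hX
    rwa [Subgroup.comap_map_eq, Subgroup.comap_top] at h1
  · intro hX
    have h1 : (X ⊔ ρ.ker).map ρ = ⊤ := by
      rw [hX, ← MonoidHom.range_eq_map, MonoidHom.range_eq_top]
      exact hsurj
    rw [Subgroup.map_sup] at h1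
    have h2 : (ρ.ker).map ρ ≤ ⊥ := by
      rintro y ⟨z, hz, rfl⟩
      simpa using hz
    rw [le_bot_iff.mp h2, sup_bot_eq] at h1
    exact h1

lemma aux_steps_bound : ∀ (t : ℕ) (N : Fin t → Subgroup G),
    (∀ i, IsMinimalNormal (N i)) → iSupIndep N →
    ∀ (m : ℕ) (W : Fin (m + 1) → Subgroup G), Monotone W → (∀ k, (W k).Normal) →
    (∀ k, W k ≤ ⨆ i, N i) →
    (Finset.univ.filter fun k : Fin m => W (Fin.castSucc k) < W k.succ).card ≤ t := by
  intro t
  induction t with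
  | zero =>
    intro N hmin hind m W hmono hnorm hle
    have hbot : ∀ k, W k = ⊥ := by
      intro k
      have h1 := hle k
      rw [iSup_of_empty] at h1
      exact le_bot_iff.mp h1
    have hempty : (Finset.univ.filter fun k : Fin m => W (Fin.castSucc k) < W k.succ) = ∅ := by
      refine Finset.filter_eq_empty_iff.mpr ?_
      intro k _
      rw [hbot, hbot]
      exact lt_irrefl ⊥
    simp [hempty]
  | succ t ih =>
    intro N hmin hind m W hmono hnorm hle
    classical
    set R : Subgroup G := ⨆ i : Fin t, N i.succ with hR
    haveI hRnormal : R.Normal := aux_normal_iSup _ (fun i => (hmin i.succ).1)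
    haveI hN0 : (N 0).Normal := (hmin 0).1
    have hRle : R ≤ ⨆ j, ⨆ (_ : j ≠ 0), N j :=
      iSup_le fun i => le_iSup₂ (f := fun (j : Fin (t+1)) (_ : j ≠ 0) => N j)
        i.succ (Fin.succ_ne_zero i)
    have hdisj : Disjoint (N 0) R := (iSupIndep_def.mp hind 0).mono_right hRle
    have hFsplit : (⨆ i, N i) = N 0 ⊔ R := by
      apply le_antisymm
      · refine iSup_le fun i => ?_
        refine Fin.cases ?_ ?_ i
        · exact le_sup_left
        · intro j
          exact le_trans (le_iSup (fun i : Fin t => N i.succ) j) le_sup_right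
      · exact sup_le (le_iSup N 0) (iSup_le fun i => le_iSup N i.succ)
    have hdich : ∀ X : Subgroup G, X.Normal → R ≤ X → X ≤ N 0 ⊔ R → X = R ∨ X = N 0 ⊔ R := by
      intro X hXn hRX hXle
      have hmod : X = R ⊔ (X ⊓ N 0) := aux_modular hRX (by rwa [sup_comm] at hXle)
      haveI := hXn
      have hXN0 : (X ⊓ N 0).Normal := Subgroup.normal_inf_normal X (N 0)
      rcases (hmin 0).2.2 (X ⊓ N 0) hXN0 inf_le_right with h | h
      · left; rw [hmod, h, sup_bot_eq]
      · right; rw [hmod, h, sup_comm]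
    set A : Fin (m+1) → Subgroup G := fun k => W k ⊓ R with hA
    set B : Fin (m+1) → Subgroup G := fun k => W k ⊔ R with hB
    have hBle : ∀ k, B k ≤ N 0 ⊔ R := fun k => sup_le ((hle k).trans hFsplit.le) le_sup_right
    have hBvals : ∀ k, B k = R ∨ B k = N 0 ⊔ R := by
      intro k
      haveI := hnorm k
      exact hdich (B k) (Subgroup.sup_normal (W k) R) le_sup_right (hBle k)
    have hmonoB : Monotone B := fun _ _ hkl => sup_le_sup_right (hmono hkl) R
    have hsubset : (Finset.univ.filter fun k : Fin m => W (Fin.castSucc k) < W k.succ) ⊆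
        (Finset.univ.filter fun k : Fin m => A (Fin.castSucc k) < A k.succ) ∪
        (Finset.univ.filter fun k : Fin m => B (Fin.castSucc k) < B k.succ) := by
      intro k hk
      simp only [Finset.mem_filter, Finset.mem_univ, true_and] at hk
      by_contra hcon
      simp only [Finset.mem_union, Finset.mem_filter, Finset.mem_univ, true_and, not_or] at hcon
      obtain ⟨hA', hB'⟩ := hcon
      have hle1 : W (Fin.castSucc k) ≤ W k.succ := hmono (Fin.castSucc_lt_succ : Fin.castSucc k < k.succ).le
      have hAeq : A (Fin.castSucc k) = A k.succ := by
        by_contra hne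
        exact hA' (lt_of_le_of_ne (inf_le_inf_right R hle1) hne)
      have hBeq : B (Fin.castSucc k) = B k.succ := by
        by_contra hne
        exact hB' (lt_of_le_of_ne (sup_le_sup_right hle1 R) hne)
      exact hk.ne (aux_eq_of_inf_sup hle1 hAeq hBeq)
    have hAbound : (Finset.univ.filter fun k : Fin m => A (Fin.castSucc k) < A k.succ).card ≤ t := by
      refine ih (fun i => N i.succ) (fun i => hmin i.succ)
        (hind.comp (Fin.succ_injective t)) m A
        (fun _ _ hkl => inf_le_inf_right R (hmono hkl))
        (fun k => by haveI := hnorm k; exact Subgroup.normal_inf_normal (W k) R)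
        (fun k => inf_le_right)
    have hBbound : (Finset.univ.filter fun k : Fin m => B (Fin.castSucc k) < B k.succ).card ≤ 1 := by
      rw [Finset.card_le_one]
      intro a ha b hb
      simp only [Finset.mem_filter, Finset.mem_univ, true_and] at ha hb
      by_contra hne
      have key : ∀ p q : Fin m, p < q → B (Fin.castSucc p) < B p.succ →
          B (Fin.castSucc q) < B q.succ → False := by
        intro p q hpq hp hq
        have h1 : B p.succ = N 0 ⊔ R := by
          rcases hBvals p.succ with h | h
          · rw [h] at hp
            exact absurd (lt_of_le_of_lt (le_sup_right : R ≤ B (Fin.castSucc p)) hp)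
              (lt_irrefl R)
          · exact h
        have h2 : B (Fin.castSucc q) = R := by
          rcases hBvals (Fin.castSucc q) with h | h
          · exact h
          · rw [h] at hq
            exact absurd (lt_of_lt_of_le hq (hBle q.succ)) (lt_irrefl _)
        have hle' : p.succ ≤ Fin.castSucc q := by
          rw [Fin.le_def]
          simp only [Fin.val_succ, Fin.coe_castSucc]
          exact Nat.succ_le_of_lt hpq
        have hbb : B p.succ ≤ B (Fin.castSucc q) := hmonoB hle'
        rw [h1, h2] at hbb
        exact (hmin 0).2.1 (hdisj.eq_bot_of_le (le_sup_left.trans hbb))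
      rcases lt_trichotomy a b with h | h | h
      · exact key a b h ha hb
      · exact hne h
      · exact key b a h hb ha
    calc (Finset.univ.filter fun k : Fin m => W (Fin.castSucc k) < W k.succ).card
        ≤ ((Finset.univ.filter fun k : Fin m => A (Fin.castSucc k) < A k.succ) ∪
           (Finset.univ.filter fun k : Fin m => B (Fin.castSucc k) < B k.succ)).card :=
          Finset.card_le_card hsubset
      _ ≤ _ + _ := Finset.card_union_le _ _
      _ ≤ t + 1 := add_le_add hAbound hBbound

lemma aux_chain_bound (t : ℕ) (N : Fin t → Subgroup G)
    (hmin : ∀ i, IsMinimalNormal (N i)) (hind : iSupIndep N)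
    (W : Fin (t + 2) → Subgroup G) (hmono : StrictMono W) (hnorm : ∀ k, (W k).Normal)
    (hle : ∀ k, W k ≤ ⨆ i, N i) : False := by
  have h := aux_steps_bound t N hmin hind (t + 1) W hmono.monotone hnorm hle
  have heq : (Finset.univ.filter fun k : Fin (t+1) => W (Fin.castSucc k) < W k.succ) =
      Finset.univ :=
    Finset.filter_true_of_mem (fun k _ => hmono (Fin.castSucc_lt_succ : Fin.castSucc k < k.succ))
  rw [heq, Finset.card_univ, Fintype.card_fin] at h
  omega


lemma aux_commutator_ne_top (K : Type*) [Group K] [Group.IsSolvable K] [Nontrivial K] :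
    commutator K ≠ ⊤ := by
  intro h
  obtain ⟨n, hn⟩ := Group.IsSolvable.solvable (G := K)
  have hall : ∀ k, derivedSeries K k = ⊤ := by
    intro k
    induction k with
    | zero => exact derivedSeries_zero K
    | succ k ihk => rw [derivedSeries_succ, ihk, ← commutator_def, h]
  rw [hall n] at hn
  exact absurd hn.symm bot_ne_top

lemma aux_min_normal_abelian [Group.IsSolvable G] {M : Subgroup G} (h : IsMinimalNormal M) :
    ∀ x ∈ M, ∀ y ∈ M, x * y = y * x := by
  haveI := h.1
  have hcomm : ⁅M, M⁆ = ⊥ := by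
    rcases h.2.2 ⁅M, M⁆ (Subgroup.commutator_normal M M) (Subgroup.commutator_le_left M M)
      with hb | ht
    · exact hb
    · exfalso
      haveI : Nontrivial M := by
        rcases Subgroup.bot_or_nontrivial M with hb | hnt
        · exact absurd hb h.2.1
        · exact hnt
      have hmap : Subgroup.map M.subtype (commutator M) = Subgroup.map M.subtype ⊤ := by
        rw [commutator_def, Subgroup.map_commutator]
        have htop : Subgroup.map M.subtype ⊤ = M := by
          rw [← MonoidHom.range_eq_map, Subgroup.subtype_range]
        rw [htop, ht]
      have := Subgroup.map_injective M.subtype_injective hmap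
      exact aux_commutator_ne_top M this
  intro x hx y hy
  have hc : ⁅x, y⁆ ∈ ⁅M, M⁆ := Subgroup.commutator_mem_commutator hx hy
  rw [hcomm] at hc
  exact (commutatorElement_eq_one_iff_commute.mp (Subgroup.mem_bot.mp hc)).eq

lemma aux_sup_abelian [Group.IsSolvable G] {t : ℕ} (N : Fin t → Subgroup G)
    (hmin : ∀ i, IsMinimalNormal (N i)) (hind : iSupIndep N) :
    ∀ x ∈ ⨆ i, N i, ∀ y ∈ ⨆ i, N i, x * y = y * x := by
  have hcomm : ∀ i j, ∀ x ∈ N i, ∀ y ∈ N j, x * y = y * x := by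
    intro i j x hx y hy
    rcases eq_or_ne i j with rfl | hij
    · exact aux_min_normal_abelian (hmin i) x hx y hy
    · have hd : Disjoint (N i) (N j) := hind.pairwiseDisjoint hij
      have hci : ⁅x, y⁆ ∈ N i := by
        have h1 : y * x⁻¹ * y⁻¹ ∈ N i := (hmin i).1.conj_mem x⁻¹ (inv_mem hx) y
        have h2 : x * (y * x⁻¹ * y⁻¹) ∈ N i := mul_mem hx h1
        have h3 : ⁅x, y⁆ = x * (y * x⁻¹ * y⁻¹) := by
          rw [commutatorElement_def]; group
        rw [h3]; exact h2
      have hcj : ⁅x, y⁆ ∈ N j := by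
        have h1 : x * y * x⁻¹ ∈ N j := (hmin j).1.conj_mem y hy x
        have h2 : (x * y * x⁻¹) * y⁻¹ ∈ N j := mul_mem h1 (inv_mem hy)
        have h3 : ⁅x, y⁆ = (x * y * x⁻¹) * y⁻¹ := by
          rw [commutatorElement_def]
        rw [h3]; exact h2
      have : ⁅x, y⁆ ∈ (⊥ : Subgroup G) := hd.le_bot (Subgroup.mem_inf.mpr ⟨hci, hcj⟩)
      exact (commutatorElement_eq_one_iff_commute.mp (Subgroup.mem_bot.mp this)).eq
  intro x hx
  refine Subgroup.iSup_induction N (C := fun x => ∀ y ∈ ⨆ i, N i, x * y = y * x) hx ?_ ?_ ?_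
  · intro i xi hxi y hy
    refine Subgroup.iSup_induction N (C := fun y => xi * y = y * xi) hy ?_ ?_ ?_
    · intro j yj hyj; exact hcomm i j xi hxi yj hyj
    · show xi * 1 = 1 * xi; rw [mul_one, one_mul]
    · intro a b ha hb
      show xi * (a * b) = (a * b) * xi
      rw [← mul_assoc, ha, mul_assoc, hb, ← mul_assoc]
  · intro y hy
    show 1 * y = y * 1
    rw [mul_one, one_mul]
  · intro a b ha hb y hy
    show (a * b) * y = y * (a * b)
    rw [mul_assoc, hb y hy, ← mul_assoc, ha y hy, mul_assoc]

lemma aux_UB {G H' : Type*} [Group G] [Group H'] [Finite G] [Finite H']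
    {F : Subgroup G} (hFn : F.Normal) (Fab : ∀ x ∈ F, ∀ y ∈ F, x * y = y * x)
    {t : ℕ} (N : Fin t → Subgroup G) (hmin : ∀ i, IsMinimalNormal (N i))
    (hind : iSupIndep N) (hsup : ⨆ i, N i = F)
    (ρ : G →* H') (hker : ρ.ker = F) (hsurj : Function.Surjective ρ)
    {n : ℕ} (g : Fin n → G) (hg : IrredSeq g) : n ≤ mIrr H' + t := by
  classical
  haveI := hFn
  have hmaptop : ∀ X : Subgroup G, X.map ρ = ⊤ ↔ X ⊔ F = ⊤ := by
    intro X
    rw [← hker]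
    exact aux_map_top_iff hsurj X
  have hclos : ∀ u : Set (Fin n), (Subgroup.closure (g '' u)).map ρ =
      Subgroup.closure ((fun k => ρ (g k)) '' u) := by
    intro u
    rw [MonoidHom.map_closure, Set.image_image]
  have hPuniv : Subgroup.closure (g '' ↑(Finset.univ : Finset (Fin n))) ⊔ F = ⊤ := by
    have hco : (↑(Finset.univ : Finset (Fin n)) : Set (Fin n)) = Set.univ := by simp
    rw [hco, Set.image_univ, hg.1, top_sup_eq]
  obtain ⟨S, hS, hSmin⟩ := Finset.exists_min_image
    (Finset.univ.filter fun S : Finset (Fin n) => Subgroup.closure (g '' ↑S) ⊔ F = ⊤)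
    Finset.card ⟨Finset.univ, by simp only [Finset.mem_filter, Finset.mem_univ, true_and]; exact hPuniv⟩
  rw [Finset.mem_filter] at hS
  have hSP : Subgroup.closure (g '' ↑S) ⊔ F = ⊤ := hS.2
  have hSmin' : ∀ S' : Finset (Fin n), Subgroup.closure (g '' ↑S') ⊔ F = ⊤ →
      S.card ≤ S'.card := by
    intro S' h
    exact hSmin S' (by simp only [Finset.mem_filter, Finset.mem_univ, true_and]; exact h)
  -- Part 1 : n ≤ S.card + t
  have hcard1 : n ≤ S.card + t := by
    by_contra hcon
    push_neg at hcon
    have hc : t + 1 ≤ Sᶜ.card := by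
      have h1 : Sᶜ.card = Fintype.card (Fin n) - S.card := Finset.card_compl S
      rw [Fintype.card_fin] at h1
      have h2 : S.card ≤ n := by
        have := Finset.card_le_card (Finset.subset_univ S)
        simpa using this
      omega
    obtain ⟨T, hTsub, hTcard⟩ := Finset.exists_subset_card_eq hc
    let ι : Fin (t+1) ↪o Fin n := T.orderEmbOfFin hTcard
    have hιS : ∀ l, ι l ∉ S := by
      intro l hlS
      have h1 : ι l ∈ T := Finset.orderEmbOfFin_mem T hTcard l
      have h2 := hTsub h1
      rw [Finset.mem_compl] at h2
      exact h2 hlS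
    set D : Fin (t+1) → Subgroup G :=
      fun j => Subgroup.closure (g '' {k | ∀ l, l ≤ j → k ≠ ι l}) with hD
    have hDanti : ∀ {a b : Fin (t+1)}, a ≤ b → D b ≤ D a := by
      intro a b hab
      exact Subgroup.closure_mono (Set.image_mono fun k hk l hl => hk l (hl.trans hab))
    have hDS : ∀ j, Subgroup.closure (g '' ↑S) ≤ D j := by
      intro j
      refine Subgroup.closure_mono (Set.image_mono ?_)
      intro k hk l _ hkl
      exact hιS l (hkl ▸ hk)
    have hDtop : ∀ j, D j ⊔ F = ⊤ :=
      fun j => eq_top_iff.mpr (hSP ▸ sup_le_sup_right (hDS j) F)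
    have hDmap : ∀ j, (D j).map ρ = ⊤ := fun j => (hmaptop _).mpr (hDtop j)
    have hDFnormal : ∀ j, ((D j) ⊓ F).Normal := fun j => aux_inter_normal Fab (hDtop j)
    have hDcompl : ∀ j, D j ≤ Subgroup.closure (g '' {ι j}ᶜ) := by
      intro j
      refine Subgroup.closure_mono (Set.image_mono ?_)
      intro k hk
      exact hk j le_rfl
    have hstrict : ∀ a b : Fin (t+1), a < b → D b ⊓ F < D a ⊓ F := by
      intro a b hab
      refine lt_of_le_of_ne (inf_le_inf_right F (hDanti hab.le)) ?_
      intro heq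
      have hDeq : D b = D a := by
        refine aux_eq_of_inf_ker_map ρ (hDanti hab.le) ?_ ?_
        · rw [hker]; exact heq
        · rw [hDmap a, hDmap b]
      have h1 : g (ι b) ∈ D a := by
        refine Subgroup.subset_closure ⟨ι b, ?_, rfl⟩
        intro l hl hc
        exact (lt_of_le_of_lt hl hab).ne' (ι.injective hc)
      have h3 : g (ι b) ∈ Subgroup.closure (g '' {ι b}ᶜ) := (hDcompl b) (hDeq ▸ h1)
      exact hg.2 (ι b) (aux_closure_compl_eq_top_of_mem hg.1 h3)
    set W : Fin (t+2) → Subgroup G := Fin.snoc (fun r : Fin (t+1) => D r.rev ⊓ F) F with hW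
    have hWmono : StrictMono W := by
      rw [Fin.strictMono_iff_lt_succ]
      intro r
      refine Fin.lastCases ?_ ?_ r
      · have h1 : W ((Fin.last t).castSucc) = D ((Fin.last t).rev) ⊓ F := by
          rw [hW, Fin.snoc_castSucc]
        have h2 : W ((Fin.last t).succ) = F := by
          rw [Fin.succ_last, hW, Fin.snoc_last]
        rw [h1, h2]
        refine lt_of_le_of_ne inf_le_right ?_
        intro heq
        have hFD : F ≤ D ((Fin.last t).rev) := by
          intro f hf
          have : f ∈ D ((Fin.last t).rev) ⊓ F := heq.symm ▸ hf
          exact (Subgroup.mem_inf.mp this).1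
        have hDj : D ((Fin.last t).rev) = ⊤ := by
          have := hDtop ((Fin.last t).rev)
          rwa [sup_eq_left.mpr hFD] at this
        refine hg.2 (ι ((Fin.last t).rev)) (eq_top_iff.mpr ?_)
        rw [← hDj]
        exact hDcompl _
      · intro q
        have h1 : W ((q.castSucc).castSucc) = D (q.castSucc.rev) ⊓ F := by
          rw [hW, Fin.snoc_castSucc]
        have h2 : W ((q.castSucc).succ) = D (q.succ.rev) ⊓ F := by
          rw [Fin.succ_castSucc, hW, Fin.snoc_castSucc]
        rw [h1, h2]
        exact hstrict q.succ.rev q.castSucc.rev (Fin.rev_lt_rev.mpr (Fin.castSucc_lt_succ : Fin.castSucc q < q.succ))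
    refine aux_chain_bound t N hmin hind W hWmono ?_ ?_
    · intro k
      refine Fin.lastCases ?_ ?_ k
      · rw [hW, Fin.snoc_last]; exact hFn
      · intro q; rw [hW, Fin.snoc_castSucc]; exact hDFnormal _
    · intro k
      rw [hsup]
      refine Fin.lastCases ?_ ?_ k
      · rw [hW, Fin.snoc_last]
      · intro q; rw [hW, Fin.snoc_castSucc]; exact inf_le_right
  -- Part 2 : S.card ≤ mIrr H'
  have hmap2 : (Subgroup.closure (g '' ↑S)).map ρ = ⊤ := (hmaptop _).mpr hSP
  have hinj : Set.InjOn (fun k => ρ (g k)) ↑S := by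
    intro k hk l hl hkl
    by_contra hne
    have himg : (fun k => ρ (g k)) '' (↑S \ {k}) = (fun k => ρ (g k)) '' ↑S := by
      refine Set.Subset.antisymm (Set.image_mono Set.diff_subset) ?_
      rintro y ⟨j, hj, rfl⟩
      rcases eq_or_ne j k with rfl | hjk
      · exact ⟨l, ⟨hl, fun hc => hne (Set.eq_of_mem_singleton hc).symm⟩, hkl.symm⟩
      · exact ⟨j, ⟨hj, hjk⟩, rfl⟩
    have h1 : (Subgroup.closure (g '' (↑S \ {k}))).map ρ = ⊤ := by
      rw [hclos, himg, ← hclos, hmap2]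
    have h3 : Subgroup.closure (g '' ↑(S.erase k)) ⊔ F = ⊤ := by
      rw [Finset.coe_erase]
      exact (hmaptop _).mp h1
    have h4 := hSmin' (S.erase k) h3
    rw [Finset.card_erase_of_mem (Finset.mem_coe.mp hk)] at h4
    have h5 : 0 < S.card := Finset.card_pos.mpr ⟨k, Finset.mem_coe.mp hk⟩
    omega
  have hmIrr : S.card ≤ mIrr H' := by
    refine le_csSup aux_mIrr_bddAbove ?_
    refine ⟨(fun k => ρ (g k)) '' ↑S, (S.finite_toSet.image _), ?_, ?_, ?_⟩
    · rw [Set.ncard_image_of_injOn hinj, Set.ncard_coe_finset]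
    · rw [← hclos, hmap2]
    · rintro y ⟨k, hk, rfl⟩ htop
      have himg : (fun k => ρ (g k)) '' ↑S \ {ρ (g k)} = (fun k => ρ (g k)) '' (↑S \ {k}) := by
        ext y
        simp only [Set.mem_diff, Set.mem_image, Set.mem_singleton_iff]
        constructor
        · rintro ⟨⟨j, hj, rfl⟩, hne⟩
          exact ⟨j, ⟨hj, fun hc => hne (by rw [Set.eq_of_mem_singleton hc])⟩, rfl⟩
        · rintro ⟨j, ⟨hj, hjk⟩, rfl⟩
          refine ⟨⟨j, hj, rfl⟩, fun hc => hjk (Set.mem_singleton_iff.mpr (hinj hj hk hc))⟩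
      rw [himg] at htop
      have h1 : (Subgroup.closure (g '' (↑S \ {k}))).map ρ = ⊤ := by rw [hclos]; exact htop
      have h3 : Subgroup.closure (g '' ↑(S.erase k)) ⊔ F = ⊤ := by
        rw [Finset.coe_erase]
        exact (hmaptop _).mp h1
      have h4 := hSmin' (S.erase k) h3
      rw [Finset.card_erase_of_mem (Finset.mem_coe.mp hk)] at h4
      have h5 : 0 < S.card := Finset.card_pos.mpr ⟨k, Finset.mem_coe.mp hk⟩
      omega
  omega


end AuxRepl

theorem replacementProperty_of_complement_of_fitting
    (G : Type*) [Group G] [Finite G] [Group.IsSolvable G]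
    (hrep : ReplacementProperty G) (hfr : frattini G = ⊥)
    (F : Subgroup G) (hF : IsFitting F) {t : ℕ} (N : Fin t → Subgroup G)
    (hmin : ∀ i, IsMinimalNormal (N i)) (hind : iSupIndep N) (hsup : ⨆ i, N i = F)
    (H : Subgroup G) (hcompl : H ⊔ F = ⊤ ∧ H ⊓ F = ⊥) :
    ReplacementProperty ↥H := by
  classical
  obtain ⟨hHFtop, hHFbot⟩ := hcompl
  have hFn : F.Normal := hF.1
  haveI := hFn
  have Fab : ∀ x ∈ F, ∀ y ∈ F, x * y = y * x := by
    have h1 := aux_sup_abelian N hmin hind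
    rwa [hsup] at h1
  -- the projection ρ : G → H with kernel F
  let φ : ↥H →* G ⧸ F := (QuotientGroup.mk' F).comp H.subtype
  have hφinj : Function.Injective φ := by
    rw [← MonoidHom.ker_eq_bot_iff, eq_bot_iff]
    intro y hy
    have h1 : ((y : G) : G ⧸ F) = 1 := hy
    have h2 : (y : G) ∈ F := (QuotientGroup.eq_one_iff _).mp h1
    have h3 : (y : G) ∈ H ⊓ F := Subgroup.mem_inf.mpr ⟨y.2, h2⟩
    rw [hHFbot] at h3
    have h4 : (y : G) = 1 := Subgroup.mem_bot.mp h3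
    rw [Subgroup.mem_bot]
    exact Subtype.ext h4
  have hφsurj : Function.Surjective φ := by
    intro q
    obtain ⟨z, rfl⟩ := QuotientGroup.mk'_surjective F q
    have hz : z ∈ (↑(H ⊔ F) : Set G) := by rw [hHFtop]; trivial
    rw [Subgroup.mul_normal] at hz
    obtain ⟨a, ha, b, hb, rfl⟩ := hz
    refine ⟨⟨a, ha⟩, ?_⟩
    show ((a : G) : G ⧸ F) = ((a * b : G) : G ⧸ F)
    have hb1 : ((b : G) : G ⧸ F) = 1 := (QuotientGroup.eq_one_iff _).mpr hb
    rw [QuotientGroup.mk_mul, hb1, mul_one]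
  let e : ↥H ≃* G ⧸ F := MulEquiv.ofBijective φ ⟨hφinj, hφsurj⟩
  let ρ : G →* ↥H := e.symm.toMonoidHom.comp (QuotientGroup.mk' F)
  have hρH : ∀ y : ↥H, ρ ↑y = y := by
    intro y
    have h1 : e y = ((y : G) : G ⧸ F) := rfl
    show e.symm ((y : G) : G ⧸ F) = y
    rw [← h1, MulEquiv.symm_apply_apply]
  have hρmem : ∀ z : G, ρ z = 1 ↔ z ∈ F := by
    intro z
    show e.symm ((z : G) : G ⧸ F) = 1 ↔ _
    rw [MulEquiv.map_eq_one_iff]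
    exact QuotientGroup.eq_one_iff z
  have hker : ρ.ker = F := by
    ext z
    rw [MonoidHom.mem_ker]
    exact hρmem z
  have hρsurj : Function.Surjective ρ := fun y => ⟨↑y, hρH y⟩
  intro h hseq x hx
  -- pick nontrivial elements of the minimal normal subgroups
  have hnn' : ∀ j : Fin t, ∃ z : G, z ∈ N j ∧ z ≠ 1 := by
    intro j
    by_contra hcon
    push_neg at hcon
    refine (hmin j).2.1 ?_
    rw [eq_bot_iff]
    intro z hz
    rw [Subgroup.mem_bot]
    by_contra hne
    exact hne (hcon z hz)
  choose nn hnnN hnn1 using hnn'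
  set gbig : Fin (mIrr ↥H + t) → G := Fin.addCases (fun i => ((h i : ↥H) : G)) nn with hgbig
  have hgleft : ∀ i : Fin (mIrr ↥H), gbig (Fin.castAdd t i) = ((h i : ↥H) : G) := by
    intro i; rw [hgbig]; exact Fin.addCases_left i
  have hgright : ∀ j : Fin t, gbig (Fin.natAdd (mIrr ↥H) j) = nn j := by
    intro j; rw [hgbig]; exact Fin.addCases_right j
  have hNF : ∀ j : Fin t, nn j ∈ F := by
    intro j; rw [← hsup]; exact le_iSup N j (hnnN j)
  have hρleft : ∀ i : Fin (mIrr ↥H), ρ (gbig (Fin.castAdd t i)) = h i := by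
    intro i; rw [hgleft]; exact hρH (h i)
  have hρright : ∀ j : Fin t, ρ (gbig (Fin.natAdd (mIrr ↥H) j)) = 1 := by
    intro j; rw [hgright]; exact (hρmem _).mpr (hNF j)
  have hcloH : Subgroup.closure (Set.range fun i : Fin (mIrr ↥H) => ((h i : ↥H) : G)) = H := by
    have h1 : (Set.range fun i : Fin (mIrr ↥H) => ((h i : ↥H) : G)) = H.subtype '' (Set.range h) := by
      rw [← Set.range_comp]; rfl
    rw [h1, ← MonoidHom.map_closure, hseq.1, ← MonoidHom.range_eq_map, Subgroup.subtype_range]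
  have hHsub_gbig : (Set.range fun i : Fin (mIrr ↥H) => ((h i : ↥H) : G)) ⊆ Set.range gbig := by
    rintro y ⟨i, rfl⟩
    exact ⟨Fin.castAdd t i, hgleft i⟩
  have hgen : Subgroup.closure (Set.range gbig) = ⊤ := by
    set K := Subgroup.closure (Set.range gbig) with hK
    have hHK : H ≤ K := by
      rw [← hcloH]
      exact Subgroup.closure_mono hHsub_gbig
    have hKF : K ⊔ F = ⊤ := eq_top_iff.mpr (by rw [← hHFtop]; exact sup_le_sup_right hHK F)
    haveI hKFn : (K ⊓ F).Normal := aux_inter_normal Fab hKF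
    have hNK : ∀ j, N j ≤ K := by
      intro j
      haveI := (hmin j).1
      have hnnK : nn j ∈ K ⊓ F := Subgroup.mem_inf.mpr
        ⟨Subgroup.subset_closure ⟨Fin.natAdd (mIrr ↥H) j, hgright j⟩, hNF j⟩
      have hncl1 : Subgroup.normalClosure {nn j} ≤ K ⊓ F :=
        Subgroup.normalClosure_le_normal (Set.singleton_subset_iff.mpr hnnK)
      have hncl2 : Subgroup.normalClosure {nn j} ≤ N j :=
        Subgroup.normalClosure_le_normal (Set.singleton_subset_iff.mpr (hnnN j))
      rcases (hmin j).2.2 _ Subgroup.normalClosure_normal hncl2 with hbot | heq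
      · exfalso
        refine hnn1 j ?_
        have hmem := Subgroup.subset_normalClosure (s := {nn j}) (Set.mem_singleton _)
        rw [hbot] at hmem
        exact Subgroup.mem_bot.mp hmem
      · rw [← heq]; exact hncl1.trans inf_le_left
    rw [eq_top_iff, ← hHFtop]
    refine sup_le hHK ?_
    rw [← hsup]
    exact iSup_le hNK
  have hirrbig : IrredSeq gbig := by
    refine ⟨hgen, ?_⟩
    intro k
    refine Fin.addCases (motive := fun k => Subgroup.closure (gbig '' {k}ᶜ) ≠ ⊤) ?_ ?_ k
    · intro i htop
      have h1 : (Subgroup.closure (gbig '' {Fin.castAdd t i}ᶜ)).map ρ = ⊤ := by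
        rw [htop, ← MonoidHom.range_eq_map, MonoidHom.range_eq_top]
        exact hρsurj
      rw [MonoidHom.map_closure, Set.image_image] at h1
      have h2 : (fun k => ρ (gbig k)) '' {Fin.castAdd t i}ᶜ ⊆ insert 1 (h '' {i}ᶜ) := by
        rintro y ⟨k', hk', rfl⟩
        revert hk'
        refine Fin.addCases (motive := fun k' => k' ∈ ({Fin.castAdd t i}ᶜ : Set (Fin (mIrr ↥H + t))) →
          ρ (gbig k') ∈ insert 1 (h '' {i}ᶜ)) ?_ ?_ k'
        · intro i' hi'
          refine Set.mem_insert_iff.mpr (Or.inr ⟨i', ?_, (hρleft i').symm⟩)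
          simp only [Set.mem_compl_iff, Set.mem_singleton_iff] at hi' ⊢
          intro hc
          exact hi' (by rw [hc])
        · intro j' _
          exact Set.mem_insert_iff.mpr (Or.inl (hρright j'))
      have h3 : Subgroup.closure ((fun k => ρ (gbig k)) '' {Fin.castAdd t i}ᶜ) ≤
          Subgroup.closure (h '' {i}ᶜ) := by
        rw [← aux_closure_insert_one (h '' {i}ᶜ)]
        exact Subgroup.closure_mono h2
      refine hseq.2 i (top_le_iff.mp ?_)
      rw [← h1]
      exact h3
    · intro j htop
      set Rj : Subgroup G := ⨆ k : {k : Fin t // k ≠ j}, N k with hRjdef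
      haveI hRjn : Rj.Normal := aux_normal_iSup _ fun k => (hmin (k : Fin t)).1
      have hRjF : Rj ≤ F := by
        rw [← hsup]
        exact iSup_le fun k => le_iSup N (k : Fin t)
      have hsub : gbig '' {Fin.natAdd (mIrr ↥H) j}ᶜ ⊆ ↑(H ⊔ Rj) := by
        rintro y ⟨k', hk', rfl⟩
        revert hk'
        refine Fin.addCases (motive := fun k' => k' ∈ ({Fin.natAdd (mIrr ↥H) j}ᶜ : Set (Fin (mIrr ↥H + t))) →
          gbig k' ∈ ↑(H ⊔ Rj)) ?_ ?_ k'
        · intro i' _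
          rw [hgleft]
          exact (le_sup_left : H ≤ H ⊔ Rj) (h i' : ↥H).2
        · intro j' hj'
          have hjj : j' ≠ j := by
            simp only [Set.mem_compl_iff, Set.mem_singleton_iff] at hj'
            intro hc
            exact hj' (by rw [hc])
          rw [hgright]
          refine (le_sup_right : Rj ≤ H ⊔ Rj) ?_
          exact le_iSup (fun k : {k : Fin t // k ≠ j} => N (k : Fin t)) ⟨j', hjj⟩ (hnnN j')
      have hHRj : H ⊔ Rj = ⊤ := by
        rw [eq_top_iff, ← htop]
        exact (Subgroup.closure_le _).mpr hsub
      have hFRj : F ≤ Rj := by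
        intro f hf
        have hf2 : f ∈ (↑(H ⊔ Rj) : Set G) := by rw [hHRj]; trivial
        rw [Subgroup.mul_normal] at hf2
        obtain ⟨a, ha, r, hr, harf⟩ := hf2
        have haF : a ∈ F := by
          have : a = f * r⁻¹ := by rw [← harf]; group
          rw [this]
          exact mul_mem hf (inv_mem (hRjF hr))
        have haB : a ∈ H ⊓ F := Subgroup.mem_inf.mpr ⟨ha, haF⟩
        rw [hHFbot] at haB
        have ha1 : a = 1 := Subgroup.mem_bot.mp haB
        have hfr2 : f = r := by rw [← harf, ha1]; exact one_mul r
        rw [hfr2]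
        exact hr
      have hNjRj : N j ≤ Rj := le_trans (by rw [← hsup]; exact le_iSup N j) hFRj
      have hRj_le : Rj ≤ ⨆ k, ⨆ (_ : k ≠ j), N k :=
        iSup_le fun k => le_iSup₂ (f := fun (k' : Fin t) (_ : k' ≠ j) => N k') (k : Fin t) k.2
      have hdisj : Disjoint (N j) Rj := (iSupIndep_def.mp hind j).mono_right hRj_le
      exact (hmin j).2.1 (hdisj.eq_bot_of_le hNjRj)
  -- the length identity
  have hub : ∀ (n' : ℕ) (g' : Fin n' → G), IrredSeq g' → n' ≤ mIrr ↥H + t :=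
    fun n' g' hg' => aux_UB hFn Fab N hmin hind hsup ρ hker hρsurj g' hg'
  have hmemG := aux_mem_mIrrSet hirrbig
  have hge1 : mIrr ↥H + t ≤ mIrr G := le_csSup aux_mIrr_bddAbove hmemG
  have hle1 : mIrr G ≤ mIrr ↥H + t := by
    refine csSup_le ⟨mIrr ↥H + t, hmemG⟩ ?_
    rintro n' ⟨s, hfin, hcard, hirr'⟩
    obtain ⟨g', hg'⟩ := aux_irredset_to_seq hfin hcard hirr'
    exact hub n' g' hg'
  have hlen : mIrr G = mIrr ↥H + t := le_antisymm hle1 hge1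
  let eq : Fin (mIrr G) ≃ Fin (mIrr ↥H + t) := finCongr hlen
  have hx' : (↑x : G) ≠ 1 := by
    intro hc
    exact hx (by
      have : (↑x : G) = ((1 : ↥H) : G) := by rw [hc]; rfl
      exact Subtype.ext this)
  obtain ⟨i, hi⟩ := hrep (gbig ∘ eq) (aux_irredseq_equiv eq gbig hirrbig) ↑x hx'
  rw [aux_update_comp, Function.Surjective.range_comp eq.surjective] at hi
  set i' : Fin (mIrr ↥H + t) := eq i with hi'def
  rcases lt_or_ge (i' : ℕ) (mIrr ↥H) with hlt | hge
  · -- replaced index is in the H-part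
    set i₀ : Fin (mIrr ↥H) := ⟨(i' : ℕ), hlt⟩ with hi₀def
    have hii : i' = Fin.castAdd t i₀ := by
      apply Fin.ext
      rfl
    refine ⟨i₀, ?_⟩
    have h1 : (Subgroup.closure (Set.range (Function.update gbig i' ↑x))).map ρ = ⊤ := by
      rw [hi, ← MonoidHom.range_eq_map, MonoidHom.range_eq_top]
      exact hρsurj
    rw [MonoidHom.map_closure, ← Set.range_comp] at h1
    have hcomp : ρ ∘ (Function.update gbig i' ↑x) =
        Function.update (fun k => ρ (gbig k)) i' x := by
      funext k
      by_cases hk : k = i'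
      · subst hk
        simp only [Function.comp_apply, Function.update_self]
        exact hρH x
      · simp only [Function.comp_apply, Function.update_of_ne hk]
    rw [hcomp] at h1
    have hrange2 : Subgroup.closure (Set.range (Function.update (fun k => ρ (gbig k)) i' x)) =
        Subgroup.closure (Set.range (Function.update h i₀ x)) := by
      apply le_antisymm
      · rw [← aux_closure_insert_one (Set.range (Function.update h i₀ x))]
        apply Subgroup.closure_mono
        rintro y ⟨k, rfl⟩
        by_cases hk : k = i'
        · subst hk
          refine Set.mem_insert_iff.mpr (Or.inr ⟨i₀, ?_⟩)
          simp only [Function.update_self]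
        · rw [Function.update_of_ne hk]
          revert hk
          refine Fin.addCases (motive := fun k => k ≠ i' →
            ρ (gbig k) ∈ insert 1 (Set.range (Function.update h i₀ x))) ?_ ?_ k
          · intro i₁ hne
            refine Set.mem_insert_iff.mpr (Or.inr ⟨i₁, ?_⟩)
            have hne₀ : i₁ ≠ i₀ := by
              intro hc
              apply hne
              apply Fin.val_injective
              have h2 := congrArg Fin.val hc
              simpa [hi₀def] using h2
            rw [Function.update_of_ne hne₀]
            exact (hρleft i₁).symm
          · intro j' _
            exact Set.mem_insert_iff.mpr (Or.inl (hρright j'))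
      · apply Subgroup.closure_mono
        rintro y ⟨k, rfl⟩
        by_cases hk : k = i₀
        · subst hk
          refine ⟨i', ?_⟩
          simp only [Function.update_self]
        · refine ⟨Fin.castAdd t k, ?_⟩
          have hne' : Fin.castAdd t k ≠ i' := by
            intro hc
            apply hk
            apply Fin.val_injective
            have h2 := congrArg Fin.val hc
            simpa [hi₀def] using h2
          rw [Function.update_of_ne hne', Function.update_of_ne hk]
          exact hρleft k
    rw [hrange2] at h1
    exact h1
  · -- replaced index is in the F-part : contradiction
    exfalso
    have hK' : H ≤ Subgroup.closure (gbig '' {i'}ᶜ) := by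
      refine le_trans (le_of_eq hcloH.symm) (Subgroup.closure_mono ?_)
      rintro y ⟨i₁, rfl⟩
      refine ⟨Fin.castAdd t i₁, ?_, hgleft i₁⟩
      simp only [Set.mem_compl_iff, Set.mem_singleton_iff]
      intro hc
      have := congrArg Fin.val hc
      simp only [Fin.coe_castAdd] at this
      omega
    have hxK : (↑x : G) ∈ Subgroup.closure (gbig '' {i'}ᶜ) := hK' x.2
    have hle2 : Subgroup.closure (Set.range (Function.update gbig i' ↑x)) ≤
        Subgroup.closure (gbig '' {i'}ᶜ) := by
      rw [aux_range_update]
      refine (Subgroup.closure_le _).mpr ?_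
      rw [Set.insert_subset_iff]
      exact ⟨hxK, Subgroup.subset_closure⟩
    rw [hi] at hle2
    exact hirrbig.2 i' (top_le_iff.mp hle2)
end
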